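/- If (S, N) is a quadratic normalisation of class (4, 3), then the restriction N̄ of N to length-two words is idempotent and satisfies N̄_{212} = N̄_{2121} = N̄_{1212} as maps on length-three words. Conversely, if φ is an idempotent map from length-two words over S to itself satisfying φ_{212} = φ_{2121} = φ_{1212} on length-three words, then there exists a quadratic normalisation (S, N) of class (4, 3) with N̄ = φ. -/

import Mathlib

namespace QN

variable {S A : Type*}

/-- A normalisation: a length-preserving map `N` on words over `S` fixing
length-one words and satisfying `N (u ++ N w ++ v) = N (u ++ w ++ v)`. -/
structure Normalisation (S : Type*) where
  N : List S → List S
  length_eq : ∀ w : List S, (N w).length = w.length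
  single : ∀ s : S, N [s] = [s]
  mid : ∀ u v w : List S, N (u ++ N w ++ v) = N (u ++ w ++ v)

/-- Extract the two entries of a length-two word (with a default fallback). -/
def pairOf : List S → S → S → S × S
  | [x, y], _, _ => (x, y)
  | _, s, t => (s, t)

/-- The restriction `N̄` of `N` to length-two words, as a map on pairs. -/
def nbar (N : List S → List S) (s t : S) : S × S :=
  pairOf (N [s, t]) s t

/-- Apply `f` to the length-two factor at (1-indexed) position `i`;
out-of-range positions act as the identity. -/
def applyAt (f : S → S → S × S) : ℕ → List S → List S
  | 1, a :: b :: l => (f a b).1 :: (f a b).2 :: l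
  | n + 2, a :: l => a :: applyAt f (n + 1) l
  | _, l => l

/-- `φ_u`: apply `φ` at the successive positions of `u`, leftmost entry of `u` first. -/
def applySeq (f : S → S → S × S) (u : List ℕ) (w : List S) : List S :=
  u.foldl (fun w i => applyAt f i w) w

/-- A word is `N`-normal iff all its length-two factors are `N`-normal. -/
def LocallyNormal (N : List S → List S) : Prop :=
  ∀ w : List S, N w = w ↔ ∀ u v : List S, ∀ s t : S, w = u ++ s :: t :: v → N [s, t] = [s, t]

/-- Every word is normalised by finitely many applications of `N̄` at positions. -/
def NbarGenerated (N : List S → List S) : Prop :=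
  ∀ w : List S, ∃ u : List ℕ, N w = applySeq (nbar N) u w

/-- A normalisation map is quadratic if it satisfies the two locality conditions. -/
def Quadratic (N : List S → List S) : Prop :=
  LocallyNormal N ∧ NbarGenerated N

/-- `e` is `N`-neutral: `N (w·e) = N (e·w) = N w · e`. -/
def Neutral (N : List S → List S) (e : S) : Prop :=
  ∀ w : List S, N (w ++ [e]) = N w ++ [e] ∧ N (e :: w) = N w ++ [e]

/-- The alternating sequence of length `m` starting with `k ∈ {1,2}`. -/
def altFrom : ℕ → ℕ → List ℕ
  | _, 0 => []
  | k, n + 1 => k :: altFrom (3 - k) n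

/-- `(S, N)` is of left-class `c`: `N = N̄_{α_c}` on length-three words. -/
def LeftClass (N : List S → List S) (c : ℕ) : Prop :=
  ∀ w : List S, w.length = 3 → N w = applySeq (nbar N) (altFrom 1 c) w

/-- `(S, N)` is of right-class `c`: `N = N̄_{ᾱ_c}` on length-three words. -/
def RightClass (N : List S → List S) (c : ℕ) : Prop :=
  ∀ w : List S, w.length = 3 → N w = applySeq (nbar N) (altFrom 2 c) w

/-- The domino rule is valid for `f`. -/
def DominoRule (f : S → S → S × S) : Prop :=
  ∀ s₁ s₂ s₁' s₂' t₀ t₁ t₂ : S,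
    f t₀ s₁ = (s₁', t₁) → f t₁ s₂ = (s₂', t₂) →
    f s₁ s₂ = (s₁, s₂) → f s₁' s₂' = (s₁', s₂')

/-- The sequences `δ_p`: `δ₁ = ε` and `δ_p = sh(δ_{p-1})·1·2·⋯·(p-1)`. -/
def delta : ℕ → List ℕ
  | 0 => []
  | 1 => []
  | p + 2 => (delta (p + 1)).map (· + 1) ++ List.range' 1 (p + 1)

/-- Apply `N` to the length-`k` factor beginning at (1-indexed) position `i`. -/
def applyFactorAt (N : List S → List S) (k : ℕ) : ℕ → List S → List S
  | 0, w => w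
  | i + 1, w => w.take i ++ N ((w.drop i).take k) ++ w.drop (i + k)

/-- Apply `N` to length-`k` factors at the successive positions of `u`. -/
def applyFactorSeq (N : List S → List S) (k : ℕ) (u : List ℕ) (w : List S) : List S :=
  u.foldl (fun w i => applyFactorAt N k i w) w

/-- One-step rewriting relation of a rewriting system `R`. -/
def RStep (R : List A → List A → Prop) (x y : List A) : Prop :=
  ∃ u v w w', R w w' ∧ x = u ++ w ++ v ∧ y = u ++ w' ++ v

/-- A rewriting system is terminating if it admits no infinite rewriting sequence. -/
def Terminating (R : List A → List A → Prop) : Prop :=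
  ¬ ∃ f : ℕ → List A, ∀ n, RStep R (f n) (f (n + 1))

/-- Confluence of a rewriting system. -/
def Confluent (R : List A → List A → Prop) : Prop :=
  ∀ w w₁ w₂ : List A, Relation.ReflTransGen (RStep R) w w₁ →
    Relation.ReflTransGen (RStep R) w w₂ →
    ∃ w', Relation.ReflTransGen (RStep R) w₁ w' ∧ Relation.ReflTransGen (RStep R) w₂ w'

/-- A word is `R`-normal if no rule of `R` applies to any of its factors. -/
def RNormal (R : List A → List A → Prop) (w : List A) : Prop :=
  ¬ ∃ w', RStep R w w'

/-- Every word rewrites to some `R`-normal word. -/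
def Normalising (R : List A → List A → Prop) : Prop :=
  ∀ w : List A, ∃ w', Relation.ReflTransGen (RStep R) w w' ∧ RNormal R w'

/-- A rewriting system is quadratic if all its rules relate length-two words. -/
def QuadraticRS (R : List A → List A → Prop) : Prop :=
  ∀ w w', R w w' → w.length = 2 ∧ w'.length = 2

/-- A rewriting system is reduced. -/
def ReducedRS (R : List A → List A → Prop) : Prop :=
  ∀ w w', R w w' → RNormal R w' ∧ RNormal (fun a b => R a b ∧ ¬(a = w ∧ b = w')) w

/-- The rewriting system associated with a quadratic normalisation:
one rule `s·t → N̄(s·t)` for each non-`N`-normal length-two word. -/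
def rules (N : List S → List S) : List S → List S → Prop :=
  fun w w' => ∃ s t : S, w = [s, t] ∧ w' = N [s, t] ∧ w' ≠ w

/-- `π_e`: delete all occurrences of `e`, landing in words over `S∖{e}`. -/
noncomputable def pie (e : S) (w : List S) : List {s : S // s ≠ e} :=
  w.filterMap fun s => @dite _ (s = e) (Classical.dec _) (fun _ => none) (fun h => some ⟨s, h⟩)

/-- The rewriting system `R_e` over `S∖{e}`. -/
def rulesE (N : List S → List S) (e : S) :
    List {s : S // s ≠ e} → List {s : S // s ≠ e} → Prop :=
  fun w w' => ∃ s t : {s : S // s ≠ e},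
    w = [s, t] ∧ N [s.1, t.1] ≠ [s.1, t.1] ∧ w' = pie e (N [s.1, t.1])

/-- `M` admits the monoid presentation `⟨S ∣ r⟩`. -/
def PresentedBy (M : Type*) [Monoid M] (S : Type*) (r : List S → List S → Prop) : Prop :=
  Nonempty ((conGen fun a b : FreeMonoid S => r a.toList b.toList).Quotient ≃* M)

/-- Left-divisibility in a monoid. -/
def LeftDvd {M : Type*} [Monoid M] (f g : M) : Prop :=
  ∃ g', f * g' = g

/-- The pair `s₁, s₂` is `S`-normal (greedy). -/
def SNormalPair {M : Type*} [Monoid M] (S : Set M) (s₁ s₂ : M) : Prop :=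
  ∀ s ∈ S, ∀ f : M, LeftDvd s (f * s₁ * s₂) → LeftDvd s (f * s₁)

/-- A word over `S` is `S`-normal if all its adjacent pairs are. -/
def SNormalWord {M : Type*} [Monoid M] (S : Set M) (w : List S) : Prop :=
  ∀ u v : List S, ∀ a b : S, w = u ++ a :: b :: v → SNormalPair S (a : M) (b : M)

end QN

open QN
section Helpers
variable {S : Type*} (f : S → S → S × S)

lemma applyAt_nil : ∀ i, applyAt f i ([] : List S) = []
  | 0 => rfl
  | 1 => rfl
  | _ + 2 => rfl

lemma applyAt_zero (w : List S) : applyAt f 0 w = w := rfl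

lemma applyAt_one_cc (a b : S) (l : List S) :
    applyAt f 1 (a :: b :: l) = (f a b).1 :: (f a b).2 :: l := rfl

lemma applyAt_add2 (n : ℕ) (a : S) (l : List S) :
    applyAt f (n + 2) (a :: l) = a :: applyAt f (n + 1) l := rfl

lemma applyAt_short : ∀ (w : List S) (i : ℕ), w.length ≤ i → applyAt f i w = w
  | [], i, _ => applyAt_nil f i
  | a :: l, 0, h => by simp at h
  | [a], 1, _ => rfl
  | a :: b :: l, 1, h => by simp at h
  | a :: l, n + 2, h => by
      rw [applyAt_add2, applyAt_short l (n + 1) (by simpa using h)]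

lemma applyAt_length : ∀ (w : List S) (i : ℕ), (applyAt f i w).length = w.length
  | [], i => by rw [applyAt_nil]
  | a :: l, 0 => rfl
  | [a], 1 => rfl
  | a :: b :: l, 1 => rfl
  | a :: l, n + 2 => by rw [applyAt_add2]; simp [applyAt_length l (n + 1)]

lemma applySeq_nil (w : List S) : applySeq f [] w = w := rfl

lemma applySeq_cons (i : ℕ) (u : List ℕ) (w : List S) :
    applySeq f (i :: u) w = applySeq f u (applyAt f i w) := rfl

lemma applySeq_append (u v : List ℕ) (w : List S) :
    applySeq f (u ++ v) w = applySeq f v (applySeq f u w) :=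
  List.foldl_append

lemma applySeq_nil_word (u : List ℕ) : applySeq f u ([] : List S) = [] := by
  induction u with
  | nil => rfl
  | cons i u ih => rw [applySeq_cons, applyAt_nil, ih]

lemma applySeq_length (u : List ℕ) (w : List S) : (applySeq f u w).length = w.length := by
  induction u generalizing w with
  | nil => rfl
  | cons i u ih => rw [applySeq_cons, ih, applyAt_length]

lemma applyAt_succ_cons {i : ℕ} (hi : 1 ≤ i) (a : S) (l : List S) :
    applyAt f (i + 1) (a :: l) = a :: applyAt f i l := by
  obtain ⟨m, rfl⟩ := Nat.exists_eq_add_of_le' hi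
  exact applyAt_add2 f m a l

lemma applySeq_shift {u : List ℕ} (hu : ∀ j ∈ u, 1 ≤ j) (a : S) (l : List S) :
    applySeq f (u.map (· + 1)) (a :: l) = a :: applySeq f u l := by
  induction u generalizing l with
  | nil => rfl
  | cons i u ih =>
      rw [List.map_cons, applySeq_cons, applyAt_succ_cons f (hu i (by simp)) a l,
        applySeq_cons, ih (fun j hj => hu j (by simp [hj]))]

lemma applyAt_cc_ge3 {j : ℕ} (hj : 3 ≤ j) (a b : S) (l : List S) :
    applyAt f j (a :: b :: l) = a :: b :: applyAt f (j - 2) l := by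
  obtain ⟨m, rfl⟩ : ∃ m, j = m + 3 := ⟨j - 3, by omega⟩
  rw [show m + 3 = (m + 1) + 2 by ring, applyAt_add2, applyAt_add2]
  norm_num

lemma applyAt_comm : ∀ (w : List S) {i j : ℕ}, 1 ≤ i → i + 2 ≤ j →
    applyAt f j (applyAt f i w) = applyAt f i (applyAt f j w)
  | [], i, j, _, _ => by rw [applyAt_nil, applyAt_nil, applyAt_nil]
  | [a], i, j, hi, hj => by
      rw [applyAt_short f [a] i (by simpa using hi),
        applyAt_short f [a] j (by simp; omega),
        applyAt_short f [a] i (by simpa using hi)]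
  | a :: b :: l, 1, j, _, hj => by
      rw [applyAt_one_cc, applyAt_cc_ge3 f hj, applyAt_cc_ge3 f hj, applyAt_one_cc]
  | a :: l, i + 2, j, _, hj => by
      have hj2 : 3 ≤ j := by omega
      obtain ⟨m, rfl⟩ : ∃ m, j = m + 2 := ⟨j - 2, by omega⟩
      rw [applyAt_add2, applyAt_add2, applyAt_add2, applyAt_add2,
        applyAt_comm l (by omega) (by omega)]

lemma applyAt_idem (hid : ∀ s t : S, f (f s t).1 (f s t).2 = f s t) :
    ∀ (w : List S) (i : ℕ), applyAt f i (applyAt f i w) = applyAt f i w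
  | [], i => by rw [applyAt_nil, applyAt_nil]
  | a :: l, 0 => rfl
  | [a], 1 => rfl
  | a :: b :: l, 1 => by
      rw [applyAt_one_cc, applyAt_one_cc, hid]
  | a :: l, n + 2 => by
      rw [applyAt_add2, applyAt_add2, applyAt_idem hid l (n + 1)]

lemma applyAt_append : ∀ (w : List S) (v : List S) {i : ℕ}, 1 ≤ i → i + 1 ≤ w.length →
    applyAt f i (w ++ v) = applyAt f i w ++ v
  | [], v, i, hi, hlen => by simp at hlen
  | [a], v, i, hi, hlen => by simp at hlen; omega

  | a :: b :: l, v, 1, _, _ => by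
      rw [List.cons_append, List.cons_append, applyAt_one_cc, applyAt_one_cc]
      simp
  | a :: l, v, i + 2, _, hlen => by
      rw [List.cons_append, applyAt_add2, applyAt_add2,
        applyAt_append l v (by omega) (by simp at hlen; omega)]
      simp

lemma applySeq_append_word (u : List ℕ) (w₀ v : List S)
    (hu : ∀ j ∈ u, 1 ≤ j ∧ j + 1 ≤ w₀.length) :
    applySeq f u (w₀ ++ v) = applySeq f u w₀ ++ v := by
  induction u generalizing w₀ with
  | nil => rfl
  | cons i u ih =>
      rw [applySeq_cons, applySeq_cons,
        applyAt_append f w₀ v (hu i (by simp)).1 (hu i (by simp)).2,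
        ih _ (fun j hj => by
          have := hu j (by simp [hj]); rwa [applyAt_length] )]

lemma applyAt_context : ∀ (u : List S) (x : List S) {i : ℕ}, 1 ≤ i →
    applyAt f (i + u.length) (u ++ x) = u ++ applyAt f i x
  | [], x, i, hi => by simp
  | a :: u, x, i, hi => by
      have : i + (a :: u).length = (i + u.length) + 1 := by simp; ring
      rw [this, List.cons_append, applyAt_succ_cons f (by omega),
        applyAt_context u x hi]
      rfl

lemma range'_shift (s n : ℕ) : List.range' (s + 1) n = (List.range' s n).map (· + 1) := by
  have := List.map_add_range' (a := 1) s n 1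
  rw [Nat.add_comm 1 s] at this
  rw [← this]
  apply List.map_congr_left
  intro a _
  omega

/-- `f`-normality of a word: every length-two factor is fixed by `f`. -/
def FNorm (w : List S) : Prop :=
  ∀ u v : List S, ∀ s t : S, w = u ++ s :: t :: v → f s t = (s, t)

lemma fnorm_nil : FNorm f ([] : List S) := by
  intro u v s t h
  exact absurd h (by simp)

lemma fnorm_single (a : S) : FNorm f [a] := by
  intro u v s t h
  rcases u with _ | ⟨x, u⟩ <;> simp_all

lemma fnorm_cons_cons {a b : S} {l : List S} :
    FNorm f (a :: b :: l) ↔ f a b = (a, b) ∧ FNorm f (b :: l) := by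
  constructor
  · intro h
    refine ⟨h [] l a b rfl, fun u v s t he => h (a :: u) v s t (by simp [he])⟩
  · rintro ⟨h1, h2⟩ u v s t he
    rcases u with _ | ⟨x, u⟩
    · simp at he
      obtain ⟨rfl, rfl, rfl⟩ := he
      exact h1
    · simp at he
      exact h2 u v s t he.2

lemma fnorm_tail {a : S} {l : List S} (h : FNorm f (a :: l)) : FNorm f l := by
  intro u v s t he
  exact h (a :: u) v s t (by simp [he])

lemma applyAt_of_fnorm : ∀ (w : List S) (i : ℕ), FNorm f w → applyAt f i w = w
  | [], i, _ => applyAt_nil f i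
  | a :: l, 0, _ => rfl
  | [a], 1, _ => rfl
  | a :: b :: l, 1, h => by
      rw [applyAt_one_cc, (fnorm_cons_cons f).mp h |>.1]
  | a :: l, n + 2, h => by
      rw [applyAt_add2, applyAt_of_fnorm l (n + 1) (fnorm_tail f h)]

lemma applySeq_of_fnorm (u : List ℕ) (w : List S) (h : FNorm f w) :
    applySeq f u w = w := by
  induction u with
  | nil => rfl
  | cons i u ih => rw [applySeq_cons, applyAt_of_fnorm f w i h, ih]

/-- The left sweep: push `t` through `x` by successive applications of `f`. -/
def sweep : S → List S → List S
  | t, [] => [t]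
  | t, s :: x => (f t s).1 :: sweep (f t s).2 x

lemma sweep_eq (t : S) (x : List S) :
    applySeq f (List.range' 1 x.length) (t :: x) = sweep f t x := by
  induction x generalizing t with
  | nil => rfl
  | cons s x ih =>
      rw [List.length_cons, List.range'_succ, range'_shift, applySeq_cons,
        applyAt_one_cc, applySeq_shift f (fun j hj => (List.mem_range'_1.mp hj).1),
        ih, sweep]

/-- The domino rule, derived from `212 = 2121` on length-three words. -/
lemma domino (h : ∀ w : List S, w.length = 3 →
      applySeq f [2, 1, 2] w = applySeq f [2, 1, 2, 1] w)
    (t₀ s₁ s₂ : S) (hn : f s₁ s₂ = (s₁, s₂)) :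
    f (f t₀ s₁).1 (f (f t₀ s₁).2 s₂).1 = ((f t₀ s₁).1, (f (f t₀ s₁).2 s₂).1) := by
  have h3 := h [t₀, s₁, s₂] rfl
  simp only [applySeq, List.foldl] at h3
  rw [show applyAt f 2 [t₀, s₁, s₂] = [t₀, (f s₁ s₂).1, (f s₁ s₂).2] from rfl] at h3
  rw [hn] at h3
  simp only [applyAt_one_cc] at h3
  rw [show ∀ a b c : S, applyAt f 2 [a, b, c] = [a, (f b c).1, (f b c).2] from
    fun _ _ _ => rfl] at h3
  simp only [applyAt_one_cc] at h3
  simp only [List.cons.injEq] at h3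
  exact Prod.ext h3.1.symm h3.2.1.symm

lemma sweep_norm (hid : ∀ s t : S, f (f s t).1 (f s t).2 = f s t)
    (h : ∀ w : List S, w.length = 3 →
      applySeq f [2, 1, 2] w = applySeq f [2, 1, 2, 1] w) :
    ∀ (x : List S) (t : S), FNorm f x → FNorm f (sweep f t x)
  | [], t, _ => fnorm_single f t
  | [s], t, _ => by
      rw [sweep, sweep]
      rw [fnorm_cons_cons]
      exact ⟨hid t s, fnorm_single f _⟩
  | s₁ :: s₂ :: x, t, hx => by
      rw [sweep, sweep]
      rw [fnorm_cons_cons]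
      constructor
      · exact domino f h t s₁ s₂ ((fnorm_cons_cons f).mp hx).1
      · rw [← sweep]
        exact sweep_norm hid h (s₂ :: x) (f t s₁).2 (fnorm_tail f hx)

/-- The normalisation map built from `f`. -/
def Nf (w : List S) : List S := applySeq f (delta w.length) w

lemma delta_two : delta 2 = [1] := rfl

lemma delta_succ (p : ℕ) :
    delta (p + 2) = (delta (p + 1)).map (· + 1) ++ List.range' 1 (p + 1) := rfl

lemma delta_mem : ∀ (p : ℕ) (i : ℕ), i ∈ delta p → 1 ≤ i ∧ i + 1 ≤ p
  | 0, i, h => by simp [delta] at h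
  | 1, i, h => by simp [delta] at h
  | p + 2, i, h => by
      rw [delta_succ, List.mem_append] at h
      rcases h with h | h
      · rw [List.mem_map] at h
        obtain ⟨j, hj, rfl⟩ := h
        have := delta_mem (p + 1) j hj
        omega
      · have := List.mem_range'_1.mp h
        omega

lemma Nf_nil : Nf f ([] : List S) = [] := rfl

lemma Nf_single (a : S) : Nf f [a] = [a] := rfl

lemma Nf_cons (a : S) (w : List S) : Nf f (a :: w) = sweep f a (Nf f w) := by
  rcases w with _ | ⟨b, w⟩
  · rfl
  · show applySeq f (delta ((b :: w).length + 1)) (a :: b :: w) = _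
    rw [show (b :: w).length + 1 = (b::w).length - 1 + 2 by simp, delta_succ,
      applySeq_append,
      applySeq_shift f (fun j hj => (delta_mem _ j hj).1)]
    rw [show (b::w).length - 1 + 1 = (b::w).length by simp]
    rw [← sweep_eq f a (Nf f (b :: w)),
      show (Nf f (b :: w)).length = (b :: w).length from applySeq_length f _ _]
    rfl

lemma Nf_norm (hid : ∀ s t : S, f (f s t).1 (f s t).2 = f s t)
    (h : ∀ w : List S, w.length = 3 →
      applySeq f [2, 1, 2] w = applySeq f [2, 1, 2, 1] w) :
    ∀ w : List S, FNorm f (Nf f w)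
  | [] => by rw [Nf_nil]; exact fnorm_nil f
  | a :: w => by
      rw [Nf_cons]
      exact sweep_norm f hid h (Nf f w) a (Nf_norm hid h w)

lemma Nf_of_fnorm (w : List S) (h : FNorm f w) : Nf f w = w :=
  applySeq_of_fnorm f _ w h

lemma Nf_length (w : List S) : (Nf f w).length = w.length := applySeq_length f _ _

lemma Nf_pair (s t : S) : Nf f [s, t] = [(f s t).1, (f s t).2] := rfl

lemma rel_lift (hid : ∀ s t : S, f (f s t).1 (f s t).2 = f s t)
    (h : ∀ w : List S, w.length = 3 →
      applySeq f [2, 1, 2] w = applySeq f [1, 2, 1, 2] w) :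
    ∀ (m : ℕ), 1 ≤ m → ∀ w : List S,
      applyAt f (m + 1) (applyAt f m (applyAt f (m + 1) w)) =
      applyAt f (m + 1) (applyAt f m (applyAt f (m + 1) (applyAt f m w))) := by
  intro m
  induction m with
  | zero => omega
  | succ m ih =>
      intro _ w
      rcases Nat.eq_or_lt_of_le (Nat.one_le_iff_ne_zero.mpr (by omega) :
        1 ≤ m + 1) with hm | hm
      · -- m + 1 = 1
        have hm1 : m = 0 := by omega
        subst hm1
        by_cases h3 : 3 ≤ w.length
        · obtain ⟨x, r, rfl, hx⟩ : ∃ x r, w = x ++ r ∧ x.length = 3 :=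
            ⟨w.take 3, w.drop 3, (List.take_append_drop 3 w).symm,
              by rw [List.length_take]; omega⟩
          have l1 : ∀ z : List S, z.length = 3 → ∀ i, 1 ≤ i → i ≤ 2 →
              applyAt f i (z ++ r) = applyAt f i z ++ r := by
            intro z hz i h1 h2
            exact applyAt_append f z r h1 (by omega)
          have hx1 : (applyAt f 2 x).length = 3 := by rw [applyAt_length]; exact hx
          have hx2 : (applyAt f 1 x).length = 3 := by rw [applyAt_length]; exact hx
          have hx3 : (applyAt f 1 (applyAt f 2 x)).length = 3 := by
            rw [applyAt_length]; exact hx1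
          have hx4 : (applyAt f 2 (applyAt f 1 x)).length = 3 := by
            rw [applyAt_length]; exact hx2
          have hx5 : (applyAt f 1 (applyAt f 2 (applyAt f 1 x))).length = 3 := by
            rw [applyAt_length]; exact hx4
          rw [l1 x hx 2 (by omega) (by omega), l1 _ hx1 1 (by omega) (by omega),
            l1 _ hx3 2 (by omega) (by omega), l1 x hx 1 (by omega) (by omega),
            l1 _ hx2 2 (by omega) (by omega), l1 _ hx4 1 (by omega) (by omega),
            l1 _ hx5 2 (by omega) (by omega)]
          have := h x hx
          simp only [applySeq, List.foldl] at this
          rw [this]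
        · -- w.length ≤ 2
          push_neg at h3
          have len2 : ∀ z : List S, z.length = w.length → applyAt f 2 z = z :=
            fun z hz => applyAt_short f z 2 (by omega)
          rw [len2 w rfl, len2 _ (applyAt_length f w 1),
            len2 _ (by rw [applyAt_length]; exact applyAt_length f w 1),
            applyAt_idem f hid]
      · -- m ≥ 1
        have hm' : 1 ≤ m := by omega
        rcases w with _ | ⟨a, l⟩
        · simp only [applyAt_nil]
        · rw [applyAt_succ_cons f (by omega) a l,
            applyAt_succ_cons f (by omega) a (applyAt f (m + 1) l),
            applyAt_succ_cons f (by omega) a l,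
            applyAt_succ_cons f (by omega) a (applyAt f m l),
            applyAt_succ_cons f (by omega) a
              (applyAt f (m + 1) (applyAt f m l)),
            applyAt_succ_cons f (by omega) a
              (applyAt f m (applyAt f (m + 1) l)),
            applyAt_succ_cons f (by omega) a
              (applyAt f m (applyAt f (m + 1) (applyAt f m l))),
            ih hm' l]

lemma applySeq_comm_gt {j : ℕ} (hj : 1 ≤ j) :
    ∀ (u : List ℕ), (∀ i ∈ u, j + 2 ≤ i) → ∀ w : List S,
      applySeq f u (applyAt f j w) = applyAt f j (applySeq f u w)
  | [], _, w => rfl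
  | i :: u, hu, w => by
      rw [applySeq_cons, applyAt_comm f w hj (hu i (by simp)),
        applySeq_comm_gt hj u (fun k hk => hu k (by simp [hk])),
        applySeq_cons]

lemma Dlem (hid : ∀ s t : S, f (f s t).1 (f s t).2 = f s t)
    (hA : ∀ (m : ℕ), 1 ≤ m → ∀ w : List S,
      applyAt f (m + 1) (applyAt f m (applyAt f (m + 1) w)) =
      applyAt f (m + 1) (applyAt f m (applyAt f (m + 1) (applyAt f m w)))) :
    ∀ (d j : ℕ), 1 ≤ j → ∀ w : List S,
      applySeq f (List.range' (j + 1) d ++ List.range' j (d + 1)) (applyAt f j w) =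
      applySeq f (List.range' (j + 1) d ++ List.range' j (d + 1)) w := by
  intro d
  induction d with
  | zero =>
      intro j hj w
      show applySeq f [j] _ = applySeq f [j] _
      rw [applySeq_cons, applySeq_cons, applyAt_idem f hid]
  | succ d ih =>
      intro j hj w
      have key : ∀ v : List S,
          applySeq f (List.range' (j + 1) (d + 1) ++ List.range' j (d + 2)) v =
          applySeq f (List.range' (j + 2) d ++ List.range' (j + 1) (d + 1))
            (applyAt f j (applyAt f (j + 1) v)) := by
        intro v
        rw [List.range'_succ (s := j+1) (n := d), List.range'_succ (s := j) (n := d+1),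
          List.range'_succ (s := j+1) (n := d)]
        rw [show ((j+1) :: List.range' (j+2) d) ++ (j :: (j+1) :: List.range' (j+2) d)
            = (j+1) :: (List.range' (j+2) d ++ (j :: ((j+1) :: List.range' (j+2) d)))
          from by simp]
        rw [applySeq_cons, applySeq_append, applySeq_cons,
          ← applySeq_comm_gt f hj (List.range' (j+2) d)
            (fun i hi => by have := (List.mem_range'_1.mp hi).1; omega)
            (applyAt f (j+1) v),
          ← applySeq_append]
      rw [key (applyAt f j w), key w]
      have ih' := ih (j + 1) (by omega)
      calc applySeq f (List.range' (j + 2) d ++ List.range' (j + 1) (d + 1))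
            (applyAt f j (applyAt f (j + 1) (applyAt f j w)))
          = applySeq f (List.range' (j + 2) d ++ List.range' (j + 1) (d + 1))
            (applyAt f (j+1) (applyAt f j (applyAt f (j + 1) (applyAt f j w)))) :=
            (ih' _).symm
        _ = applySeq f (List.range' (j + 2) d ++ List.range' (j + 1) (d + 1))
            (applyAt f (j+1) (applyAt f j (applyAt f (j + 1) w))) := by
            rw [← hA j hj w]
        _ = applySeq f (List.range' (j + 2) d ++ List.range' (j + 1) (d + 1))
            (applyAt f j (applyAt f (j + 1) w)) := ih' _

lemma absorb (hid : ∀ s t : S, f (f s t).1 (f s t).2 = f s t)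
    (h12 : ∀ w : List S, w.length = 3 →
      applySeq f [2, 1, 2] w = applySeq f [1, 2, 1, 2] w) :
    ∀ (p i : ℕ) (w : List S), 1 ≤ i → i + 1 ≤ p →
      applySeq f (delta p) (applyAt f i w) = applySeq f (delta p) w
  | 0, i, w, hi, hp => by omega
  | 1, i, w, hi, hp => by omega
  | 2, i, w, hi, hp => by
      have : i = 1 := by omega
      subst this
      show applySeq f [1] _ = applySeq f [1] _
      rw [applySeq_cons, applySeq_cons, applyAt_idem f hid]
  | p + 3, 1, w, _, _ => by
      have hA := rel_lift f hid h12
      have entA : ∀ i ∈ ((delta (p + 1)).map (· + 1)).map (· + 1), 1 + 2 ≤ i := by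
        intro i hi
        simp only [List.mem_map] at hi
        obtain ⟨j, ⟨k, hk, rfl⟩, rfl⟩ := hi
        have := delta_mem (p + 1) k hk
        omega
      rw [show delta (p + 3) = (((delta (p + 1)).map (· + 1)).map (· + 1)
            ++ List.range' 2 (p + 1)) ++ List.range' 1 (p + 2) from by
          rw [show p + 3 = (p + 1) + 2 from rfl, delta_succ (p + 1), delta_succ p,
            List.map_append, range'_shift 1 (p + 1)]]
      simp only [applySeq_append]
      rw [applySeq_comm_gt f (by omega) _ entA w]
      generalize applySeq f (((delta (p + 1)).map (· + 1)).map (· + 1)) w = z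
      rw [← applySeq_append, ← applySeq_append]
      exact Dlem f hid hA (p + 1) 1 le_rfl z
  | p + 3, m + 2, w, _, hp => by
      rcases w with _ | ⟨a, l⟩
      · rw [applyAt_nil]
      · rw [show (m : ℕ) + 2 = (m + 1) + 1 from rfl, applyAt_succ_cons f (by omega) a l,
          show p + 3 = (p + 1) + 2 from rfl, delta_succ (p + 1), applySeq_append,
          applySeq_append,
          applySeq_shift f (fun j hj => (delta_mem _ j hj).1) a l,
          applySeq_shift f (fun j hj => (delta_mem _ j hj).1) a (applyAt f (m + 1) l),
          absorb hid h12 (p + 2) (m + 1) l (by omega) (by omega)]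

lemma Nf_applyAt (hid : ∀ s t : S, f (f s t).1 (f s t).2 = f s t)
    (h12 : ∀ w : List S, w.length = 3 →
      applySeq f [2, 1, 2] w = applySeq f [1, 2, 1, 2] w)
    {w : List S} {i : ℕ} (hi : 1 ≤ i) (hw : i + 1 ≤ w.length) :
    Nf f (applyAt f i w) = Nf f w := by
  unfold Nf
  rw [applyAt_length]
  exact absorb f hid h12 w.length i w hi hw

lemma Nf_applySeq (hid : ∀ s t : S, f (f s t).1 (f s t).2 = f s t)
    (h12 : ∀ w : List S, w.length = 3 →
      applySeq f [2, 1, 2] w = applySeq f [1, 2, 1, 2] w)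
    (u : List ℕ) (w : List S) (hu : ∀ j ∈ u, 1 ≤ j ∧ j + 1 ≤ w.length) :
    Nf f (applySeq f u w) = Nf f w := by
  induction u generalizing w with
  | nil => rfl
  | cons i u ih =>
      rw [applySeq_cons,
        ih (applyAt f i w) (fun j hj => by
          rw [applyAt_length]; exact hu j (by simp [hj])),
        Nf_applyAt f hid h12 (hu i (by simp)).1 (hu i (by simp)).2]

lemma applyAt_mid (u w v : List S) {i : ℕ} (hi : 1 ≤ i) (hw : i + 1 ≤ w.length) :
    applyAt f (i + u.length) (u ++ w ++ v) = u ++ applyAt f i w ++ v := by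
  rw [List.append_assoc, applyAt_context f u (w ++ v) hi,
    applyAt_append f w v hi hw, List.append_assoc]

lemma applySeq_mid (u v : List S) :
    ∀ (s : List ℕ) (w : List S), (∀ j ∈ s, 1 ≤ j ∧ j + 1 ≤ w.length) →
      applySeq f (s.map (· + u.length)) (u ++ w ++ v) = u ++ applySeq f s w ++ v := by
  intro s
  induction s with
  | nil => intro w _; rfl
  | cons i s ih =>
      intro w hs
      rw [List.map_cons, applySeq_cons,
        applyAt_mid f u w v (hs i (by simp)).1 (hs i (by simp)).2,
        applySeq_cons,
        ih (applyAt f i w) (fun j hj => by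
          rw [applyAt_length]; exact hs j (by simp [hj]))]

lemma Nf_mid (hid : ∀ s t : S, f (f s t).1 (f s t).2 = f s t)
    (h12 : ∀ w : List S, w.length = 3 →
      applySeq f [2, 1, 2] w = applySeq f [1, 2, 1, 2] w)
    (u v w : List S) : Nf f (u ++ Nf f w ++ v) = Nf f (u ++ w ++ v) := by
  rw [show u ++ Nf f w ++ v
      = applySeq f ((delta w.length).map (· + u.length)) (u ++ w ++ v) from
    (applySeq_mid f u v (delta w.length) w (delta_mem w.length)).symm]
  apply Nf_applySeq f hid h12
  intro j hj
  simp only [List.mem_map] at hj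
  obtain ⟨k, hk, rfl⟩ := hj
  have := delta_mem w.length k hk
  simp only [List.length_append]
  omega

lemma Nf_pair_fix (s t : S) : Nf f [s, t] = [s, t] ↔ f s t = (s, t) := by
  rw [Nf_pair]
  constructor
  · intro h
    simp only [List.cons.injEq, and_true] at h
    exact Prod.ext h.1 h.2
  · intro h
    rw [h]

lemma nbar_Nf : nbar (Nf f) = f := by
  funext s t
  show pairOf (Nf f [s, t]) s t = f s t
  rw [Nf_pair]
  rfl

end Helpers

theorem statement14_aux {S : Type*} :
    (∀ ns : Normalisation S, Quadratic ns.N → LeftClass ns.N 4 → RightClass ns.N 3 →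
      (∀ s t : S, ns.N (ns.N [s, t]) = ns.N [s, t]) ∧
      (∀ w : List S, w.length = 3 →
        applySeq (nbar ns.N) [2, 1, 2] w = applySeq (nbar ns.N) [2, 1, 2, 1] w ∧
        applySeq (nbar ns.N) [2, 1, 2] w = applySeq (nbar ns.N) [1, 2, 1, 2] w)) ∧
    (∀ f : S → S → S × S,
      (∀ s t : S, f (f s t).1 (f s t).2 = f s t) →
      (∀ w : List S, w.length = 3 →
        applySeq f [2, 1, 2] w = applySeq f [2, 1, 2, 1] w ∧
        applySeq f [2, 1, 2] w = applySeq f [1, 2, 1, 2] w) →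
      ∃ ns : Normalisation S, Quadratic ns.N ∧ LeftClass ns.N 4 ∧ RightClass ns.N 3 ∧
        nbar ns.N = f) := by
  constructor
  · intro ns hq hl hr
    have hNN : ∀ w : List S, ns.N (ns.N w) = ns.N w := by
      intro w
      simpa using ns.mid [] [] w
    refine ⟨fun s t => hNN [s, t], ?_⟩
    intro w hw3
    have hr' : ns.N w = applySeq (nbar ns.N) [2, 1, 2] w := hr w hw3
    have hl' : ns.N w = applySeq (nbar ns.N) [1, 2, 1, 2] w := hl w hw3
    have hNfix : applyAt (nbar ns.N) 1 (ns.N w) = ns.N w := by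
      have hlen : (ns.N w).length = 3 := by rw [ns.length_eq]; exact hw3
      obtain ⟨a, b, c, hw⟩ := List.length_eq_three.mp hlen
      have hab : ns.N [a, b] = [a, b] :=
        ((hq.1 (ns.N w)).mp (hNN w)) [] [c] a b hw
      have hnb : nbar ns.N a b = (a, b) := by
        unfold nbar
        rw [hab]
        rfl
      rw [hw, applyAt_one_cc, hnb]
    constructor
    · rw [show ([2, 1, 2, 1] : List ℕ) = [2, 1, 2] ++ [1] from rfl,
        applySeq_append, ← hr']
      rw [show applySeq (nbar ns.N) [1] (ns.N w) = applyAt (nbar ns.N) 1 (ns.N w)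
        from rfl, hNfix, hr']
    · rw [← hr', ← hl']
  · intro f hid h3
    have h212 : ∀ w : List S, w.length = 3 →
        applySeq f [2, 1, 2] w = applySeq f [2, 1, 2, 1] w := fun w h => (h3 w h).1
    have h1212 : ∀ w : List S, w.length = 3 →
        applySeq f [2, 1, 2] w = applySeq f [1, 2, 1, 2] w := fun w h => (h3 w h).2
    refine ⟨⟨Nf f, Nf_length f, Nf_single f, Nf_mid f hid h1212⟩, ⟨?_, ?_⟩, ?_, ?_, ?_⟩
    · -- LocallyNormal
      intro w
      constructor
      · intro hw u v s t he
        have hn : FNorm f w := hw ▸ Nf_norm f hid h212 w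
        exact (Nf_pair_fix f s t).mpr (hn u v s t he)
      · intro h
        apply Nf_of_fnorm
        intro u v s t he
        exact (Nf_pair_fix f s t).mp (h u v s t he)
    · -- NbarGenerated
      intro w
      exact ⟨delta w.length, by rw [show nbar (Nf f) = f from nbar_Nf f]; rfl⟩
    · -- LeftClass 4
      intro w hw3
      rw [show nbar (Nf f) = f from nbar_Nf f]
      show applySeq f (delta w.length) w = applySeq f [1, 2, 1, 2] w
      rw [hw3, show delta 3 = [2, 1, 2] from rfl]
      exact h1212 w hw3
    · -- RightClass 3
      intro w hw3
      rw [show nbar (Nf f) = f from nbar_Nf f]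
      show applySeq f (delta w.length) w = applySeq f [2, 1, 2] w
      rw [hw3, show delta 3 = [2, 1, 2] from rfl]
    · exact nbar_Nf f


/-- **Theorem A.** If `(S, N)` is a quadratic normalisation of class `(4, 3)`,
then `N̄` is idempotent and satisfies `N̄_{212} = N̄_{2121} = N̄_{1212}`. Conversely, every
idempotent map `φ` on length-two words satisfying `φ_{212} = φ_{2121} = φ_{1212}` is the
restriction `N̄` of a quadratic normalisation `(S, N)` of class `(4, 3)`. -/
theorem statement14 {S : Type*} :
    (∀ ns : Normalisation S, Quadratic ns.N → LeftClass ns.N 4 → RightClass ns.N 3 →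
      (∀ s t : S, ns.N (ns.N [s, t]) = ns.N [s, t]) ∧
      (∀ w : List S, w.length = 3 →
        applySeq (nbar ns.N) [2, 1, 2] w = applySeq (nbar ns.N) [2, 1, 2, 1] w ∧
        applySeq (nbar ns.N) [2, 1, 2] w = applySeq (nbar ns.N) [1, 2, 1, 2] w)) ∧
    (∀ f : S → S → S × S,
      (∀ s t : S, f (f s t).1 (f s t).2 = f s t) →
      (∀ w : List S, w.length = 3 →
        applySeq f [2, 1, 2] w = applySeq f [2, 1, 2, 1] w ∧
        applySeq f [2, 1, 2] w = applySeq f [1, 2, 1, 2] w) →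
      ∃ ns : Normalisation S, Quadratic ns.N ∧ LeftClass ns.N 4 ∧ RightClass ns.N 3 ∧
        nbar ns.N = f) :=
  statement14_aux
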